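/- arXiv:2010.10883 — 4 statements merged into one kernel-verified Lean document; each statement's English description precedes it below -/
import Mathlib

section
/- Suppose h : D → ℝ is a zeroing control barrier function for the control-affine system ẋ = f(x) + g(x)u with extended class-K function α, i.e., for all x ∈ D there exists u ∈ U with L_f h(x) + L_g h(x)u + α(h(x)) ≥ 0. Let ψ be a nondecreasing continuously differentiable function on an open set containing [βξ, ξ] with ψ(βξ) = βξ > 0, and define h̃(x) = h(x) if h(x) ≤ βξ, ψ(h(x)) if βξ < h(x) < ξ, and ψ(ξ) if h(x) ≥ ξ. Assume furthermore there exists a locally Lipschitz γ : D → U with L_f h(x) + L_g h(x)γ(x) ≥ 0 for all x ∈ D. Then for every x ∈ D, sup_{u ∈ U} [L_f h̃(x) + L_g h̃(x)u + α(h̃(x))] ≥ 0, i.e., h̃ satisfies the ZCBF inequality on D. -/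
/-- The derivative of a function monotone on an open set is nonnegative there. -/
lemma aux_deriv_nonneg {ψ : ℝ → ℝ} {O : Set ℝ} (hO : IsOpen O)
    (hmono : MonotoneOn ψ O) {y d : ℝ} (hy : y ∈ O) (hd : HasDerivAt ψ d y) :
    0 ≤ d := by
  have hslope : Filter.Tendsto (slope ψ y) (nhdsWithin y (Set.Ioi y)) (nhds d) :=
    (hasDerivAt_iff_tendsto_slope.mp hd).mono_left
      (nhdsWithin_mono y (fun t ht => ne_of_gt ht))
  refine ge_of_tendsto hslope ?_
  have hOmem : O ∈ nhdsWithin y (Set.Ioi y) :=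
    nhdsWithin_le_nhds (hO.mem_nhds hy)
  filter_upwards [hOmem, self_mem_nhdsWithin] with t htO (htI : y < t)
  rw [slope_def_field]
  apply div_nonneg
  · exact sub_nonneg.mpr (hmono hy htO htI.le)
  · exact sub_nonneg.mpr htI.le

theorem stmt_5 {n m : ℕ} (ξ β : ℝ) (hξ : 0 < ξ) (hβ : 0 < β) (hβ1 : β < 1)
    (D : Set (EuclideanSpace ℝ (Fin n))) (hD : IsOpen D)
    (U : Set (EuclideanSpace ℝ (Fin m)))
    (f : EuclideanSpace ℝ (Fin n) → EuclideanSpace ℝ (Fin n))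
    (g : EuclideanSpace ℝ (Fin n) → EuclideanSpace ℝ (Fin m) →L[ℝ] EuclideanSpace ℝ (Fin n))
    (h : EuclideanSpace ℝ (Fin n) → ℝ) (hh : ContDiff ℝ 1 h)
    (α : ℝ → ℝ) (hαcont : Continuous α) (hαmono : StrictMono α) (hα0 : α 0 = 0)
    -- h is a ZCBF with class-K function α
    (hzcbf : ∀ x ∈ D, ∃ u ∈ U,
      fderiv ℝ h x (f x) + fderiv ℝ h x (g x u) + α (h x) ≥ 0)
    -- ψ is nondecreasing and C¹ on an open set containing [βξ, ξ], with ψ(βξ) = βξ > 0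
    (ψ : ℝ → ℝ) (O : Set ℝ) (hO : IsOpen O) (hsub : Set.Icc (β * ξ) ξ ⊆ O)
    (hψC1 : ContDiffOn ℝ 1 ψ O) (hψmono : MonotoneOn ψ O)
    (hψval : ψ (β * ξ) = β * ξ) (hβξpos : 0 < β * ξ)
    -- locally Lipschitz evading maneuver γ
    (γ : EuclideanSpace ℝ (Fin n) → EuclideanSpace ℝ (Fin m))
    (hγlip : LocallyLipschitz γ) (hγU : ∀ x ∈ D, γ x ∈ U)
    (hγsafe : ∀ x ∈ D, fderiv ℝ h x (f x) + fderiv ℝ h x (g x (γ x)) ≥ 0)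
    -- the saturated barrier function
    (htilde : EuclideanSpace ℝ (Fin n) → ℝ)
    (hhtilde : ∀ x, htilde x =
      if h x ≤ β * ξ then h x
      else if h x < ξ then ψ (h x)
      else ψ ξ) :
    ∀ x ∈ D, ∃ u ∈ U,
      fderiv ℝ htilde x (f x) + fderiv ℝ htilde x (g x u) + α (htilde x) ≥ 0 := by
  intro x hx
  have hβξlt : β * ξ < ξ := by nlinarith
  have hβξO : β * ξ ∈ O := hsub ⟨le_rfl, hβξlt.le⟩
  have hξO : ξ ∈ O := hsub ⟨hβξlt.le, le_rfl⟩
  have hhd : Differentiable ℝ h := hh.differentiable one_ne_zero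
  have hψξβ : β * ξ ≤ ψ ξ := hψval ▸ hψmono hβξO hξO hβξlt.le
  -- lower bound on htilde
  have hlb : ∀ y, min (h y) (β * ξ) ≤ htilde y := by
    intro y
    rw [hhtilde y]
    split_ifs with h1 h2
    · exact min_le_left _ _
    · refine (min_le_right _ _).trans ?_
      rw [← hψval]
      exact hψmono hβξO (hsub ⟨(not_le.mp h1).le, h2.le⟩) (not_le.mp h1).le
    · exact (min_le_right _ _).trans hψξβ
  rcases lt_trichotomy (h x) (β * ξ) with hlt | heq | hgt
  · -- low region: htilde agrees with h near x
    obtain ⟨u, hu, hineq⟩ := hzcbf x hx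
    refine ⟨u, hu, ?_⟩
    have hopen : IsOpen (h ⁻¹' Set.Iio (β * ξ)) :=
      hh.continuous.isOpen_preimage _ isOpen_Iio
    have hev : htilde =ᶠ[nhds x] h := by
      filter_upwards [hopen.mem_nhds hlt] with y (hy : h y < β * ξ)
      rw [hhtilde y, if_pos hy.le]
    rw [hev.fderiv_eq]
    have : htilde x = h x := by rw [hhtilde x, if_pos hlt.le]
    rw [this]
    exact hineq
  · -- boundary h x = βξ
    refine ⟨γ x, hγU x hx, ?_⟩
    have hhtx : htilde x = β * ξ := by rw [hhtilde x, if_pos heq.le, heq]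
    have hαpos : 0 < α (β * ξ) := by
      rw [← hα0]; exact hαmono hβξpos
    set w := f x + g x (γ x) with hw
    have hsum : fderiv ℝ htilde x (f x) + fderiv ℝ htilde x (g x (γ x))
        = fderiv ℝ htilde x w := (map_add _ _ _).symm
    by_cases hdiff : DifferentiableAt ℝ htilde x
    · have hc : (0:ℝ) ≤ fderiv ℝ h x w := by
        have := hγsafe x hx
        rw [hw, map_add]
        linarith
      have hline : HasDerivAt (fun t : ℝ => x + t • w) w 0 := by
        simpa using ((hasDerivAt_id (0:ℝ)).smul_const w).const_add x
      have hfx : HasFDerivAt h (fderiv ℝ h x) ((0:ℝ) • w + x) := by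
        simpa using (hhd x).hasFDerivAt
      have hfx' : HasFDerivAt h (fderiv ℝ h x) (x + (0:ℝ) • w) := by
        simpa using (hhd x).hasFDerivAt
      have hH : HasDerivAt (fun t : ℝ => h (x + t • w)) (fderiv ℝ h x w) 0 :=
        hfx'.comp_hasDerivAt 0 hline
      have htx' : HasFDerivAt htilde (fderiv ℝ htilde x) (x + (0:ℝ) • w) := by
        simpa using hdiff.hasFDerivAt
      have hT : HasDerivAt (fun t : ℝ => htilde (x + t • w)) (fderiv ℝ htilde x w) 0 :=
        htx'.comp_hasDerivAt 0 hline
      have hslopeT : Filter.Tendsto (slope (fun t : ℝ => htilde (x + t • w)) 0)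
          (nhdsWithin 0 (Set.Ioi 0)) (nhds (fderiv ℝ htilde x w)) :=
        (hasDerivAt_iff_tendsto_slope.mp hT).mono_left
          (nhdsWithin_mono 0 (fun t ht => ne_of_gt ht))
      have hslopeH : Filter.Tendsto (slope (fun t : ℝ => h (x + t • w)) 0)
          (nhdsWithin 0 (Set.Ioi 0)) (nhds (fderiv ℝ h x w)) :=
        (hasDerivAt_iff_tendsto_slope.mp hH).mono_left
          (nhdsWithin_mono 0 (fun t ht => ne_of_gt ht))
      have hminT : Filter.Tendsto (fun t : ℝ => min (slope (fun t : ℝ => h (x + t • w)) 0 t) 0)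
          (nhdsWithin 0 (Set.Ioi 0)) (nhds 0) := by
        have h0 : Filter.Tendsto (fun _ : ℝ => (0:ℝ))
            (nhdsWithin 0 (Set.Ioi 0)) (nhds (0:ℝ)) := tendsto_const_nhds
        have := hslopeH.min h0
        rwa [min_eq_right hc] at this
      have hD0 : (0:ℝ) ≤ fderiv ℝ htilde x w := by
        refine le_of_tendsto_of_tendsto hminT hslopeT ?_
        filter_upwards [self_mem_nhdsWithin] with t (ht : (0:ℝ) < t)
        have hT0 : htilde (x + (0:ℝ) • w) = β * ξ := by
          rw [zero_smul, add_zero, hhtx]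
        have hH0 : h (x + (0:ℝ) • w) = β * ξ := by
          rw [zero_smul, add_zero, heq]
        rw [slope_def_field, slope_def_field, hT0, hH0, sub_zero]
        rcases le_total (h (x + t • w)) (β * ξ) with hc1 | hc1
        · refine (min_le_left _ _).trans ?_
          have hlb' := hlb (x + t • w)
          rw [min_eq_left hc1] at hlb'
          exact (div_le_div_iff_of_pos_right ht).mpr (by linarith)
        · refine (min_le_right _ _).trans ?_
          have hlb' := hlb (x + t • w)
          rw [min_eq_right hc1] at hlb'
          exact div_nonneg (by linarith) ht.le
      rw [hsum, hhtx]
      linarith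
    · rw [fderiv_zero_of_not_differentiableAt hdiff]
      simp only [ContinuousLinearMap.zero_apply, hhtx]
      linarith
  · -- h x > βξ
    refine ⟨γ x, hγU x hx, ?_⟩
    rcases lt_or_ge (h x) ξ with hlt2 | hge
    · -- middle region
      have hxO : h x ∈ O := hsub ⟨hgt.le, hlt2.le⟩
      have hψd : DifferentiableAt ℝ ψ (h x) :=
        (hψC1.contDiffAt (hO.mem_nhds hxO)).differentiableAt one_ne_zero
      have hcomp : HasFDerivAt (fun y => ψ (h y)) (deriv ψ (h x) • fderiv ℝ h x) x :=
        hψd.hasDerivAt.comp_hasFDerivAt x (hhd x).hasFDerivAt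
      have hopen : IsOpen (h ⁻¹' Set.Ioo (β * ξ) ξ) :=
        hh.continuous.isOpen_preimage _ isOpen_Ioo
      have hev : htilde =ᶠ[nhds x] fun y => ψ (h y) := by
        filter_upwards [hopen.mem_nhds ⟨hgt, hlt2⟩] with y hy
        rw [hhtilde y, if_neg (not_le.mpr hy.1), if_pos hy.2]
      have hfd : fderiv ℝ htilde x = deriv ψ (h x) • fderiv ℝ h x := by
        rw [hev.fderiv_eq, hcomp.fderiv]
      have hdnn : 0 ≤ deriv ψ (h x) :=
        aux_deriv_nonneg hO hψmono hxO hψd.hasDerivAt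
      have hsafe := hγsafe x hx
      have hαpos : 0 < α (ψ (h x)) := by
        rw [← hα0]
        apply hαmono
        calc (0:ℝ) < β * ξ := hβξpos
          _ = ψ (β * ξ) := hψval.symm
          _ ≤ ψ (h x) := hψmono hβξO hxO hgt.le
      have hhtx : htilde x = ψ (h x) := by
        rw [hhtilde x, if_neg (not_le.mpr hgt), if_pos hlt2]
      rw [hfd, hhtx]
      simp only [ContinuousLinearMap.coe_smul', Pi.smul_apply, smul_eq_mul]
      nlinarith [mul_nonneg hdnn (le_of_lt hαpos)]
    · -- upper region: htilde has a global max at x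
      have hhtx : htilde x = ψ ξ := by
        rw [hhtilde x, if_neg (not_le.mpr (lt_of_lt_of_le hβξlt hge)),
          if_neg (not_lt.mpr hge)]
      have hub : ∀ y, htilde y ≤ ψ ξ := by
        intro y
        rw [hhtilde y]
        split_ifs with h1 h2
        · exact h1.trans (hψval ▸ hψmono hβξO hξO hβξlt.le)
        · exact hψmono (hsub ⟨(not_le.mp h1).le, h2.le⟩) hξO h2.le
        · exact le_rfl
      have hmax : IsLocalMax htilde x := by
        apply Filter.Eventually.of_forall
        intro y
        rw [hhtx]
        exact hub y
      have hfd0 : fderiv ℝ htilde x = 0 := hmax.fderiv_eq_zero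
      have hαpos : 0 < α (ψ ξ) := by
        rw [← hα0]; exact hαmono (lt_of_lt_of_le hβξpos hψξβ)
      rw [hfd0, hhtx]
      simp only [ContinuousLinearMap.zero_apply]
      linarith
end

section
/- Let α be an extended class-K function, continuously differentiable on (βξ, ξ) with nonincreasing derivative there, and let ψ satisfy: ψ(η) = η for η ≤ βξ, ψ'(η) > 0 and ψ' nonincreasing on (βξ, ξ), and ψ''(η) < 0 on (βξ, ξ). Define α₂(η) = α(ψ(η))/ψ'(η). Then for all η with η < ξ, α₂(η) ≥ α(η). -/
theorem stmt_11 (ξ β : ℝ) (hξ : 0 < ξ) (hβ : 0 < β) (hβ1 : β < 1)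
    (α : ℝ → ℝ) (hαcont : Continuous α) (hαmono : StrictMono α) (hα0 : α 0 = 0)
    (hαC1 : ContDiffOn ℝ 1 α (Set.Ioo (β * ξ) ξ))
    (hαder : AntitoneOn (deriv α) (Set.Ioo (β * ξ) ξ))
    (ψ : ℝ → ℝ) (hψC1 : ContDiff ℝ 1 ψ)
    (hψid : ∀ η ≤ β * ξ, ψ η = η)
    (hψpos : ∀ η ∈ Set.Ioo (β * ξ) ξ, 0 < deriv ψ η)
    (hψanti : AntitoneOn (deriv ψ) (Set.Ioo (β * ξ) ξ))
    (hψconc : ∀ η ∈ Set.Ioo (β * ξ) ξ, deriv (deriv ψ) η < 0)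
    (α₂ : ℝ → ℝ) (hα₂ : ∀ η, α₂ η = α (ψ η) / deriv ψ η) :
    ∀ η < ξ, α₂ η ≥ α η := by
  set a := β * ξ with ha_def
  have ha : 0 < a := mul_pos hβ hξ
  have haξ : a < ξ := by
    have := mul_lt_of_lt_one_left hξ hβ1
    simpa [ha_def] using this
  have hψa : ψ a = a := hψid a le_rfl
  have hψdiff : Differentiable ℝ ψ := hψC1.differentiable one_ne_zero
  have hcontd : Continuous (deriv ψ) := hψC1.continuous_deriv le_rfl
  -- deriv ψ = 1 strictly below a
  have hdψ1 : ∀ η < a, deriv ψ η = 1 := by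
    intro η hη
    have h : ψ =ᶠ[nhds η] id := by
      filter_upwards [Iio_mem_nhds hη] with t ht
      exact hψid t (le_of_lt ht)
    rw [h.deriv_eq, deriv_id]
  -- deriv ψ a = 1 by continuity from the left
  have hdψa : deriv ψ a = 1 := by
    have h1 : Filter.Tendsto (deriv ψ) (nhdsWithin a (Set.Iio a)) (nhds (deriv ψ a)) :=
      (hcontd.tendsto a).mono_left nhdsWithin_le_nhds
    have h2 : Filter.Tendsto (deriv ψ) (nhdsWithin a (Set.Iio a)) (nhds 1) := by
      apply Filter.Tendsto.congr' _ tendsto_const_nhds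
      filter_upwards [self_mem_nhdsWithin] with t ht
      exact (hdψ1 t ht).symm
    exact tendsto_nhds_unique h1 h2
  -- deriv ψ ≤ 1 on Ioo a ξ
  have hdψle1 : ∀ η ∈ Set.Ioo a ξ, deriv ψ η ≤ 1 := by
    intro η hη
    have h1 : Filter.Tendsto (deriv ψ) (nhdsWithin a (Set.Ioi a)) (nhds 1) := by
      rw [← hdψa]
      exact (hcontd.tendsto a).mono_left nhdsWithin_le_nhds
    apply ge_of_tendsto h1
    filter_upwards [Ioo_mem_nhdsGT_of_mem ⟨le_rfl, hη.1⟩] with t ht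
    exact hψanti ⟨ht.1, ht.2.trans hη.2⟩ hη (le_of_lt ht.2)
  -- ψ η ≤ η on Ioo a ξ
  have hψle : ∀ η ∈ Set.Ioo a ξ, ψ η ≤ η := by
    intro η hη
    have hmono : MonotoneOn (fun t => t - ψ t) (Set.Icc a η) := by
      apply monotoneOn_of_deriv_nonneg (convex_Icc a η)
      · exact (continuous_id.sub hψC1.continuous).continuousOn
      · intro t ht
        exact ((differentiable_id.sub hψdiff) t).differentiableWithinAt
      · intro t ht
        rw [interior_Icc] at ht
        have hd : HasDerivAt (fun t => t - ψ t) (1 - deriv ψ t) t :=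
          (hasDerivAt_id t).sub (hψdiff t).hasDerivAt
        rw [hd.deriv]
        have : deriv ψ t ≤ 1 := hdψle1 t ⟨ht.1, ht.2.trans hη.2⟩
        linarith
    have := hmono (Set.left_mem_Icc.mpr (le_of_lt hη.1))
      (Set.right_mem_Icc.mpr (le_of_lt hη.1)) (le_of_lt hη.1)
    simp only [hψa] at this
    linarith
  -- a < ψ η on Ioo a ξ
  have hψgt : ∀ η ∈ Set.Ioo a ξ, a < ψ η := by
    intro η hη
    have hmono : StrictMonoOn ψ (Set.Icc a η) := by
      apply strictMonoOn_of_deriv_pos (convex_Icc a η) hψC1.continuous.continuousOn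
      intro t ht
      rw [interior_Icc] at ht
      exact hψpos t ⟨ht.1, ht.2.trans hη.2⟩
    have := hmono (Set.left_mem_Icc.mpr (le_of_lt hη.1))
      (Set.right_mem_Icc.mpr (le_of_lt hη.1)) hη.1
    rwa [hψa] at this
  have hψmem : ∀ η ∈ Set.Ioo a ξ, ψ η ∈ Set.Ioo a ξ := fun η hη =>
    ⟨hψgt η hη, lt_of_le_of_lt (hψle η hη) hη.2⟩
  -- differentiability of α on Ioo
  have hαdiff : ∀ x ∈ Set.Ioo a ξ, DifferentiableAt ℝ α x := fun x hx =>
    ((hαC1.differentiableOn one_ne_zero).differentiableAt (isOpen_Ioo.mem_nhds hx))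
  -- HasDerivAt for α₂ on Ioo
  have hα₂fun : α₂ = fun t => α (ψ t) / deriv ψ t := funext hα₂
  have hα₂deriv : ∀ η ∈ Set.Ioo a ξ, HasDerivAt α₂
      ((deriv α (ψ η) * deriv ψ η * deriv ψ η - α (ψ η) * deriv (deriv ψ) η)
        / (deriv ψ η) ^ 2) η := by
    intro η hη
    have h1 : HasDerivAt (fun t => α (ψ t)) (deriv α (ψ η) * deriv ψ η) η :=
      (hαdiff (ψ η) (hψmem η hη)).hasDerivAt.comp η (hψdiff η).hasDerivAt
    have h2 : HasDerivAt (deriv ψ) (deriv (deriv ψ) η) η :=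
      (differentiableAt_of_deriv_ne_zero (ne_of_lt (hψconc η hη))).hasDerivAt
    rw [hα₂fun]
    exact h1.div h2 (ne_of_gt (hψpos η hη))
  -- α positive at positive points
  have hαpos : ∀ x, 0 < x → 0 < α x := by
    intro x hx
    have := hαmono hx
    rwa [hα0] at this
  -- monotonicity of g = α₂ - α on Ico a ξ
  have hdψne : ∀ η ∈ Set.Ico a ξ, deriv ψ η ≠ 0 := by
    intro η hη
    rcases eq_or_lt_of_le hη.1 with h | h
    · rw [← h, hdψa]; norm_num
    · exact ne_of_gt (hψpos η ⟨h, hη.2⟩)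
  have hgmono : MonotoneOn (fun t => α₂ t - α t) (Set.Ico a ξ) := by
    apply monotoneOn_of_deriv_nonneg (convex_Ico a ξ)
    · apply ContinuousOn.sub _ hαcont.continuousOn
      rw [hα₂fun]
      exact ((hαcont.comp hψC1.continuous).continuousOn).div hcontd.continuousOn hdψne
    · intro t ht
      rw [interior_Ico] at ht
      exact (((hα₂deriv t ht).sub (hαdiff t ht).hasDerivAt).differentiableAt).differentiableWithinAt
    · intro t ht
      rw [interior_Ico] at ht
      have hd : HasDerivAt (fun t => α₂ t - α t) _ t := (hα₂deriv t ht).sub (hαdiff t ht).hasDerivAt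
      rw [hd.deriv]
      set p := deriv ψ t with hp_def
      have hp : 0 < p := hψpos t ht
      have hp2 : (0 : ℝ) < p ^ 2 := pow_pos hp 2
      have hs : deriv (deriv ψ) t < 0 := hψconc t ht
      have hQ : 0 < α (ψ t) := hαpos _ (lt_trans ha (hψgt t ht))
      have hA : deriv α t ≤ deriv α (ψ t) := hαder (hψmem t ht) ht (hψle t ht)
      have key : (deriv α (ψ t) * p * p - α (ψ t) * deriv (deriv ψ) t) / p ^ 2
          = deriv α (ψ t) - α (ψ t) * deriv (deriv ψ) t / p ^ 2 := by
        field_simp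
      rw [key]
      have : α (ψ t) * deriv (deriv ψ) t / p ^ 2 < 0 :=
        div_neg_of_neg_of_pos (mul_neg_of_pos_of_neg hQ hs) hp2
      linarith
  -- conclude
  intro η hη
  rcases le_or_gt η a with h | h
  · have hψη : ψ η = η := hψid η h
    have hdη : deriv ψ η = 1 := by
      rcases eq_or_lt_of_le h with h' | h'
      · rw [h', hdψa]
      · exact hdψ1 η h'
    rw [hα₂ η, hψη, hdη, div_one]
  · have h0 := hgmono (Set.mem_Ico.mpr ⟨le_rfl, haξ⟩) (Set.mem_Ico.mpr ⟨le_of_lt h, hη⟩)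
      (le_of_lt h)
    have ha2 : α₂ a = α a := by rw [hα₂ a, hψa, hdψa, div_one]
    simp only [ha2] at h0
    linarith [h0]
end

section
/- Under the assumptions of Lemma 2 (α extended class-K, continuously differentiable with nonincreasing derivative on (βξ, ξ); ψ identity below βξ with ψ' > 0 nonincreasing and ψ'' < 0 on (βξ, ξ)), the function α₂(η) = α(ψ(η))/ψ'(η) is strictly increasing on (0, ξ) and satisfies α₂(0) = 0; i.e., α₂ restricted to [0, ξ) is a class-K function. -/
open Set Filter Topology

-- derivative of a monotone function is nonneg at a differentiability point
lemma mono_deriv_nonneg {f : ℝ → ℝ} (hf : Monotone f) {u : ℝ}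
    (hd : DifferentiableAt ℝ f u) : 0 ≤ deriv f u := by
  have h := hd.hasDerivAt
  rw [hasDerivAt_iff_tendsto_slope] at h
  have h' : Tendsto (slope f u) (𝓝[>] u) (𝓝 (deriv f u)) :=
    h.mono_left (nhdsWithin_mono _ (fun y hy => ne_of_gt hy))
  refine ge_of_tendsto h' ?_
  filter_upwards [self_mem_nhdsWithin] with y hy
  have huy : u < y := hy
  rw [slope_def_field]
  exact div_nonneg (by linarith [hf huy.le]) (by linarith)

theorem stmt_12 (ξ β : ℝ) (hξ : 0 < ξ) (hβ : 0 < β) (hβ1 : β < 1)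
    (α : ℝ → ℝ) (hαcont : Continuous α) (hαmono : StrictMono α) (hα0 : α 0 = 0)
    (hαC1 : ContDiffOn ℝ 1 α (Set.Ioo (β * ξ) ξ))
    (hαder : AntitoneOn (deriv α) (Set.Ioo (β * ξ) ξ))
    (ψ : ℝ → ℝ) (hψC1 : ContDiff ℝ 1 ψ)
    (hψid : ∀ η ≤ β * ξ, ψ η = η)
    (hψpos : ∀ η ∈ Set.Ioo (β * ξ) ξ, 0 < deriv ψ η)
    (hψanti : AntitoneOn (deriv ψ) (Set.Ioo (β * ξ) ξ))
    (hψconc : ∀ η ∈ Set.Ioo (β * ξ) ξ, deriv (deriv ψ) η < 0)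
    (α₂ : ℝ → ℝ) (hα₂ : ∀ η, α₂ η = α (ψ η) / deriv ψ η) :
    StrictMonoOn α₂ (Set.Ioo 0 ξ) ∧ α₂ 0 = 0 := by
  set b := β * ξ with hb
  have hb0 : 0 < b := mul_pos hβ hξ
  have hbξ : b < ξ := by nlinarith
  have hψcont : Continuous ψ := hψC1.continuous
  have hψ'cont : Continuous (deriv ψ) := hψC1.continuous_deriv le_rfl
  -- ψ = id on Iio b locally, so deriv ψ = 1 there
  have hψ'one : ∀ t < b, deriv ψ t = 1 := by
    intro t ht
    have : ψ =ᶠ[𝓝 t] id := by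
      filter_upwards [Iio_mem_nhds ht] with y hy
      exact hψid y (le_of_lt hy)
    rw [this.deriv_eq, deriv_id]
  -- deriv ψ b = 1 by continuity
  have hψ'b : deriv ψ b = 1 := by
    have h1 : Tendsto (deriv ψ) (𝓝[<] b) (𝓝 (deriv ψ b)) :=
      (hψ'cont.tendsto b).mono_left nhdsWithin_le_nhds
    have h2 : Tendsto (deriv ψ) (𝓝[<] b) (𝓝 1) := by
      refine Tendsto.congr' ?_ tendsto_const_nhds
      filter_upwards [self_mem_nhdsWithin] with y hy
      exact (hψ'one y hy).symm
    exact tendsto_nhds_unique h1 h2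
  have hψb : ψ b = b := hψid b le_rfl
  -- deriv ψ has derivative (deriv (deriv ψ)) on Ioo b ξ
  have hψ''diff : ∀ x ∈ Ioo b ξ, HasDerivAt (deriv ψ) (deriv (deriv ψ) x) x := fun x hx =>
    (differentiableAt_of_deriv_ne_zero (ne_of_lt (hψconc x hx))).hasDerivAt
  -- deriv ψ < 1 on Ioo b ξ
  have hψ'lt : ∀ x ∈ Ioo b ξ, deriv ψ x < 1 := by
    intro x hx
    obtain ⟨c, hc, hcs⟩ := exists_hasDerivAt_eq_slope (deriv ψ) (deriv (deriv ψ)) hx.1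
      (hψ'cont.continuousOn)
      (fun y hy => hψ''diff y ⟨hy.1, hy.2.trans hx.2⟩)
    have hcneg : deriv (deriv ψ) c < 0 := hψconc c ⟨hc.1, hc.2.trans hx.2⟩
    rw [hψ'b] at hcs
    have hden : 0 < x - b := by linarith [hx.1]
    rw [hcs] at hcneg
    have := (div_lt_iff₀ hden).mp hcneg
    linarith
  -- ψ x < x on Ioo b ξ  (hence ψ x < ξ); and ψ x > b
  have hψlt : ∀ x ∈ Ioo b ξ, ψ x < x := by
    intro x hx
    obtain ⟨c, hc, hcs⟩ := exists_hasDerivAt_eq_slope ψ (deriv ψ) hx.1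
      (hψcont.continuousOn)
      (fun y hy => (hψC1.differentiable one_ne_zero y).hasDerivAt)
    have h1 : deriv ψ c < 1 := hψ'lt c ⟨hc.1, hc.2.trans hx.2⟩
    rw [hψb] at hcs
    have hden : 0 < x - b := by linarith [hx.1]
    rw [hcs] at h1
    have := (div_lt_iff₀ hden).mp h1
    linarith
  have hψmonoIco : StrictMonoOn ψ (Ico b ξ) := by
    apply strictMonoOn_of_deriv_pos (convex_Ico b ξ) (hψcont.continuousOn)
    intro x hx
    rw [interior_Ico] at hx
    exact hψpos x hx
  have hψmem : ∀ x ∈ Ioo b ξ, ψ x ∈ Ioo b ξ := by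
    intro x hx
    refine ⟨?_, (hψlt x hx).trans hx.2⟩
    have := hψmonoIco (left_mem_Ico.2 hbξ) ⟨hx.1.le, hx.2⟩ hx.1
    rwa [hψb] at this
  -- α₂ = α on Iic b ∩ (0,∞) etc: for t ≤ b, α₂ t = α t
  have hα₂eq : ∀ t ≤ b, α₂ t = α t := by
    intro t ht
    rcases eq_or_lt_of_le ht with h | h
    · rw [hα₂, h, hψb, hψ'b, div_one]
    · rw [hα₂, hψid t ht, hψ'one t h, div_one]
  -- derivative of α₂ positive on Ioo b ξ
  have hα₂fun : α₂ = fun t => α (ψ t) / deriv ψ t := funext hα₂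
  have key : ∀ x ∈ Ioo b ξ, 0 < deriv α₂ x := by
    intro x hx
    have hu := hψmem x hx
    have hαdiff : DifferentiableAt ℝ α (ψ x) :=
      ((hαC1.differentiableOn one_ne_zero).differentiableAt (isOpen_Ioo.mem_nhds hu))
    have h1 : HasDerivAt (fun t => α (ψ t)) (deriv α (ψ x) * deriv ψ x) x :=
      (hαdiff.hasDerivAt).comp x (hψC1.differentiable one_ne_zero x).hasDerivAt
    have h2 : HasDerivAt (deriv ψ) (deriv (deriv ψ) x) x := hψ''diff x hx
    have hp : 0 < deriv ψ x := hψpos x hx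
    have h3 : HasDerivAt (fun t => α (ψ t) / deriv ψ t)
        ((deriv α (ψ x) * deriv ψ x * deriv ψ x - α (ψ x) * deriv (deriv ψ) x)
          / (deriv ψ x)^2) x := h1.div h2 (ne_of_gt hp)
    rw [hα₂fun, h3.deriv]
    have hαpos : 0 < α (ψ x) := by
      have := hαmono (show (0:ℝ) < ψ x from hb0.trans hu.1)
      rwa [hα0] at this
    have hα'nn : 0 ≤ deriv α (ψ x) := mono_deriv_nonneg hαmono.monotone hαdiff
    have hcneg : deriv (deriv ψ) x < 0 := hψconc x hx
    apply div_pos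
    · nlinarith [mul_nonneg (mul_nonneg hα'nn hp.le) hp.le, mul_pos hαpos (neg_pos.2 hcneg)]
    · positivity
  -- α₂ continuous on Ico b ξ
  have hα₂cont : ContinuousOn α₂ (Ico b ξ) := by
    rw [hα₂fun]
    apply ContinuousOn.div ((hαcont.comp hψcont).continuousOn) (hψ'cont.continuousOn)
    intro x hx
    rcases eq_or_lt_of_le hx.1 with h | h
    · rw [← h, hψ'b]; norm_num
    · exact ne_of_gt (hψpos x ⟨h, hx.2⟩)
  have hsm2 : StrictMonoOn α₂ (Ico b ξ) := by
    apply strictMonoOn_of_deriv_pos (convex_Ico b ξ) hα₂cont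
    intro x hx
    rw [interior_Ico] at hx
    exact key x hx
  constructor
  · intro x hx y hy hxy
    rcases le_or_gt y b with hyb | hyb
    · rw [hα₂eq x (hxy.le.trans hyb), hα₂eq y hyb]
      exact hαmono hxy
    · rcases le_or_gt x b with hxb | hxb
      · calc α₂ x = α x := hα₂eq x hxb
          _ ≤ α b := hαmono.monotone hxb
          _ = α₂ b := (hα₂eq b le_rfl).symm
          _ < α₂ y := hsm2 (left_mem_Ico.2 hbξ) ⟨hyb.le, hy.2⟩ hyb
      · exact hsm2 ⟨hxb.le, hx.2⟩ ⟨hyb.le, hy.2⟩ hxy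
  · rw [hα₂eq 0 hb0.le, hα0]
end

section
/- Suppose h is a ZCBF with class-K function α, h̃ is the saturated barrier (h̃ = ψ∘h below level ξ, constant ψ(ξ) above), with α continuously differentiable and derivative nonincreasing on (βξ, ξ), and ψ identity below βξ with ψ' > 0 nonincreasing and ψ'' < 0 on (βξ, ξ). Then for every x ∈ D, K(x) ⊆ K̃(x), where K(x) = {u ∈ U : L_f h(x) + L_g h(x)u + α(h(x)) ≥ 0} and K̃(x) = {u ∈ U : L_f h̃(x) + L_g h̃(x)u + α(h̃(x)) ≥ 0}. -/
open Set Filter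
lemma key_ineq (ξ β : ℝ) (hξ : 0 < ξ) (hβ : 0 < β) (hβ1 : β < 1)
    (α : ℝ → ℝ) (hαcont : Continuous α) (hαmono : StrictMono α) (hα0 : α 0 = 0)
    (hαC1 : ContDiffOn ℝ 1 α (Set.Ioo (β * ξ) ξ))
    (hαder : AntitoneOn (deriv α) (Set.Ioo (β * ξ) ξ))
    (ψ : ℝ → ℝ) (hψC1 : ContDiff ℝ 1 ψ)
    (hψid : ∀ η ≤ β * ξ, ψ η = η)
    (hψpos : ∀ η < ξ, 0 < deriv ψ η)
    (hψanti : AntitoneOn (deriv ψ) (Set.Ioo (β * ξ) ξ))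
    (hψconc : ∀ η ∈ Set.Ioo (β * ξ) ξ, deriv (deriv ψ) η < 0) :
    ∀ η < ξ, deriv ψ η * α η ≤ α (ψ η) := by
  have hbξ : 0 < β * ξ := mul_pos hβ hξ
  have hbξξ : β * ξ < ξ := by nlinarith
  have hψcont : Continuous ψ := hψC1.continuous
  have hψ'cont : Continuous (deriv ψ) := hψC1.continuous_deriv le_rfl
  have hψdiff : Differentiable ℝ ψ := hψC1.differentiable one_ne_zero
  -- deriv ψ = 1 strictly below β*ξ
  have hd1 : ∀ t < β * ξ, deriv ψ t = 1 := by
    intro t ht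
    have : ψ =ᶠ[nhds t] id := by
      filter_upwards [Iio_mem_nhds ht] with s hs
      exact hψid s (le_of_lt hs)
    rw [this.deriv_eq, deriv_id]
  -- deriv ψ (β*ξ) = 1 by continuity
  have hdb : deriv ψ (β * ξ) = 1 := by
    have t1 : Tendsto (deriv ψ) (nhdsWithin (β * ξ) (Iio (β * ξ))) (nhds (deriv ψ (β * ξ))) :=
      (hψ'cont.tendsto _).mono_left nhdsWithin_le_nhds
    have t2 : Tendsto (deriv ψ) (nhdsWithin (β * ξ) (Iio (β * ξ))) (nhds 1) := by
      apply Tendsto.congr' _ tendsto_const_nhds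
      filter_upwards [self_mem_nhdsWithin] with s hs
      exact (hd1 s hs).symm
    exact tendsto_nhds_unique t1 t2
  -- deriv ψ ≤ 1 on (β*ξ, ξ)
  have hdle1 : ∀ t ∈ Ioo (β * ξ) ξ, deriv ψ t ≤ 1 := by
    intro t ht
    have t1 : Tendsto (deriv ψ) (nhdsWithin (β * ξ) (Ioi (β * ξ))) (nhds (deriv ψ (β * ξ))) :=
      (hψ'cont.tendsto _).mono_left nhdsWithin_le_nhds
    have : deriv ψ t ≤ deriv ψ (β * ξ) := by
      refine ge_of_tendsto t1 ?_
      filter_upwards [Ioo_mem_nhdsGT_of_mem (Set.left_mem_Ico.2 ht.1)] with s hs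
      exact hψanti ⟨hs.1, lt_trans hs.2 ht.2⟩ ht (le_of_lt hs.2)
    rwa [hdb] at this
  -- ψ strictly monotone on Iic ξ
  have hψmono : StrictMonoOn ψ (Iic ξ) := by
    apply strictMonoOn_of_deriv_pos (convex_Iic ξ) hψcont.continuousOn
    intro t ht
    rw [interior_Iic] at ht
    exact hψpos t ht
  have hψbξ : ψ (β * ξ) = β * ξ := hψid _ le_rfl
  -- ψ t ≤ t on [β*ξ, ξ]
  have hψle : ∀ t ∈ Icc (β * ξ) ξ, ψ t ≤ t := by
    have hmono : MonotoneOn (fun t => t - ψ t) (Icc (β * ξ) ξ) := by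
      apply monotoneOn_of_deriv_nonneg (convex_Icc _ _)
        (continuous_id.sub hψcont).continuousOn
        (differentiable_id.sub hψdiff).differentiableOn
      intro t ht
      rw [interior_Icc] at ht
      have : deriv (fun t => t - ψ t) t = 1 - deriv ψ t :=
        ((hasDerivAt_id t).sub (hψdiff t).hasDerivAt).deriv
      show 0 ≤ deriv (fun t => t - ψ t) t
      rw [this]
      linarith [hdle1 t ht]
    intro t ht
    have := hmono (Set.left_mem_Icc.2 (le_of_lt hbξξ)) ht ht.1
    simp only [hψbξ] at this
    linarith
  -- main inequality
  intro η hη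
  rcases lt_trichotomy η (β * ξ) with hc | hc | hc
  · rw [hψid η (le_of_lt hc), hd1 η hc, one_mul]
  · rw [hc, hψbξ, hdb, one_mul]
  · -- η ∈ (β*ξ, ξ)
    have hηmem : η ∈ Ioo (β * ξ) ξ := ⟨hc, hη⟩
    have hαdiff : ∀ t ∈ Ioo (β * ξ) ξ, DifferentiableAt ℝ α t := fun t ht =>
      (hαC1.differentiableOn one_ne_zero).differentiableAt (isOpen_Ioo.mem_nhds ht)
    have hψ''diff : ∀ t ∈ Ioo (β * ξ) ξ, DifferentiableAt ℝ (deriv ψ) t := by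
      intro t ht
      by_contra hcon
      have := deriv_zero_of_not_differentiableAt hcon
      have := hψconc t ht
      linarith
    have hψtmem : ∀ t ∈ Ioo (β * ξ) ξ, ψ t ∈ Ioo (β * ξ) ξ := by
      intro t ht
      constructor
      · have := hψmono (show (β*ξ:ℝ) ∈ Iic ξ from le_of_lt hbξξ)
          (le_of_lt ht.2 : t ∈ Iic ξ) ht.1
        rwa [hψbξ] at this
      · exact lt_of_le_of_lt (hψle t ⟨le_of_lt ht.1, le_of_lt ht.2⟩) ht.2
    set F : ℝ → ℝ := fun t => α (ψ t) - deriv ψ t * α t with hF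
    have hFmono : StrictMonoOn F (Icc (β * ξ) η) := by
      apply strictMonoOn_of_deriv_pos (convex_Icc _ _)
      · exact ((hαcont.comp hψcont).sub (hψ'cont.mul hαcont)).continuousOn
      · intro t ht
        rw [interior_Icc] at ht
        have htm : t ∈ Ioo (β * ξ) ξ := ⟨ht.1, lt_trans ht.2 hη⟩
        have h1 : HasDerivAt (fun t => α (ψ t)) (deriv α (ψ t) * deriv ψ t) t :=
          (hαdiff _ (hψtmem t htm)).hasDerivAt.comp t (hψdiff t).hasDerivAt
        have h2 : HasDerivAt (fun t => deriv ψ t * α t)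
            (deriv (deriv ψ) t * α t + deriv ψ t * deriv α t) t :=
          ((hψ''diff t htm).hasDerivAt).mul (hαdiff t htm).hasDerivAt
        have hF' : deriv F t = deriv α (ψ t) * deriv ψ t
            - (deriv (deriv ψ) t * α t + deriv ψ t * deriv α t) := (h1.sub h2).deriv
        rw [hF']
        have hαt : 0 < α t := by
          have := hαmono (show (0:ℝ) < t from lt_trans hbξ ht.1)
          rwa [hα0] at this
        have hαd : deriv α t ≤ deriv α (ψ t) :=
          hαder (hψtmem t htm) htm (hψle t ⟨le_of_lt htm.1, le_of_lt htm.2⟩)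
        have := hψconc t htm
        have := hψpos t htm.2
        nlinarith
    have hF0 : F (β * ξ) = 0 := by
      simp only [hF, hψbξ, hdb, one_mul, sub_self]
    have := hFmono (Set.left_mem_Icc.2 (le_of_lt hc)) (Set.right_mem_Icc.2 (le_of_lt hc)) hc
    rw [hF0] at this
    simp only [hF] at this
    linarith


theorem stmt_14 {n m : ℕ} (ξ β : ℝ) (hξ : 0 < ξ) (hβ : 0 < β) (hβ1 : β < 1)
    (D : Set (EuclideanSpace ℝ (Fin n))) (hD : IsOpen D)
    (U : Set (EuclideanSpace ℝ (Fin m)))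
    (f : EuclideanSpace ℝ (Fin n) → EuclideanSpace ℝ (Fin n))
    (g : EuclideanSpace ℝ (Fin n) → EuclideanSpace ℝ (Fin m) →L[ℝ] EuclideanSpace ℝ (Fin n))
    (h : EuclideanSpace ℝ (Fin n) → ℝ) (hh : ContDiff ℝ 1 h)
    (α : ℝ → ℝ) (hαcont : Continuous α) (hαmono : StrictMono α) (hα0 : α 0 = 0)
    (hαC1 : ContDiffOn ℝ 1 α (Set.Ioo (β * ξ) ξ))
    (hαder : AntitoneOn (deriv α) (Set.Ioo (β * ξ) ξ))
    -- h is a ZCBF with class-K function α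
    (hzcbf : ∀ x ∈ D, ∃ u ∈ U,
      fderiv ℝ h x (f x) + fderiv ℝ h x (g x u) + α (h x) ≥ 0)
    -- ψ: identity below βξ, ψ' > 0 nonincreasing and ψ'' < 0 on (βξ, ξ)
    (ψ : ℝ → ℝ) (hψC1 : ContDiff ℝ 1 ψ)
    (hψid : ∀ η ≤ β * ξ, ψ η = η)
    (hψpos : ∀ η < ξ, 0 < deriv ψ η)
    (hψanti : AntitoneOn (deriv ψ) (Set.Ioo (β * ξ) ξ))
    (hψconc : ∀ η ∈ Set.Ioo (β * ξ) ξ, deriv (deriv ψ) η < 0)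
    (hψξ : 0 < ψ ξ)
    -- the saturated barrier: h̃ = ψ ∘ h below level ξ, constant ψ(ξ) above
    (htilde : EuclideanSpace ℝ (Fin n) → ℝ)
    (hhtilde : ∀ x, htilde x = if h x < ξ then ψ (h x) else ψ ξ) :
    ∀ x ∈ D,
      {u ∈ U | fderiv ℝ h x (f x) + fderiv ℝ h x (g x u) + α (h x) ≥ 0} ⊆
      {u ∈ U | fderiv ℝ htilde x (f x) + fderiv ℝ htilde x (g x u) + α (htilde x) ≥ 0} := by
  intro x _ u hu
  obtain ⟨huU, hineq⟩ := hu
  refine ⟨huU, ?_⟩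
  have key := key_ineq ξ β hξ hβ hβ1 α hαcont hαmono hα0 hαC1 hαder ψ hψC1 hψid hψpos
    hψanti hψconc
  by_cases hlt : h x < ξ
  · -- below the saturation level
    have heq : htilde =ᶠ[nhds x] fun y => ψ (h y) := by
      have hopen : IsOpen {y | h y < ξ} := isOpen_lt (hh.continuous) continuous_const
      filter_upwards [hopen.mem_nhds hlt] with y hy
      rw [hhtilde y, if_pos hy]
    have hder : HasFDerivAt htilde (deriv ψ (h x) • fderiv ℝ h x) x := by
      have : HasFDerivAt (fun y => ψ (h y)) (deriv ψ (h x) • fderiv ℝ h x) x :=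
        (hψC1.differentiable one_ne_zero (h x)).hasDerivAt.comp_hasFDerivAt x
          (hh.differentiable one_ne_zero x).hasFDerivAt
      exact this.congr_of_eventuallyEq heq
    have hfd : fderiv ℝ htilde x = deriv ψ (h x) • fderiv ℝ h x := hder.fderiv
    have hval : htilde x = ψ (h x) := by rw [hhtilde x, if_pos hlt]
    rw [hfd, hval]
    simp only [ContinuousLinearMap.smul_apply, smul_eq_mul]
    have hk := key (h x) hlt
    have hp := hψpos (h x) hlt
    nlinarith
  · -- at or above the saturation level: x is a global max of htilde
    have hval : htilde x = ψ ξ := by rw [hhtilde x, if_neg hlt]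
    have hψmono : StrictMonoOn ψ (Iic ξ) := by
      apply strictMonoOn_of_deriv_pos (convex_Iic ξ) hψC1.continuous.continuousOn
      intro t ht
      rw [interior_Iic] at ht
      exact hψpos t ht
    have hmax : IsLocalMax htilde x := by
      apply Filter.Eventually.of_forall
      intro y
      rw [hhtilde y, hval]
      by_cases hy : h y < ξ
      · rw [if_pos hy]
        exact le_of_lt (hψmono (le_of_lt hy) (self_mem_Iic) hy)
      · rw [if_neg hy]
    have hfd : fderiv ℝ htilde x = 0 := hmax.fderiv_eq_zero
    rw [hfd, hval]
    simp only [ContinuousLinearMap.zero_apply, add_zero, zero_add]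
    have : 0 < α (ψ ξ) := by
      have := hαmono hψξ
      rwa [hα0] at this
    linarith
end
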